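/- Let u, v, w ∈ ℝ with u > 0, u ≥ |v| and w ≥ 0. Define g(t) = e^{2ut} + 2e^{−ut}cos(√3·v·t) − 3e^{−wt}. Then g(0) = 0, g′(0) = 3w, and g(t) > 0 for all t > 0. -/

import Mathlib

noncomputable def g (u v w t : ℝ) : ℝ :=
  Real.exp (2 * u * t) + 2 * Real.exp (-(u * t)) * Real.cos (Real.sqrt 3 * v * t)
    - 3 * Real.exp (-(w * t))

theorem g_props (u v w : ℝ) (hu : 0 < u) (huv : |v| ≤ u) (hw : 0 ≤ w) :
    g u v w 0 = 0 ∧ HasDerivAt (g u v w) (3 * w) 0 ∧ ∀ t : ℝ, 0 < t → 0 < g u v w t := by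
  set c : ℝ := Real.sqrt 3 * v with hc
  have hc2 : c ^ 2 = 3 * v ^ 2 := by
    rw [hc, mul_pow, Real.sq_sqrt (by norm_num : (0:ℝ) ≤ 3)]
  have hv2 : v ^ 2 ≤ u ^ 2 := by
    have := abs_nonneg v
    nlinarith [sq_abs v]
  refine ⟨by simp [g]; norm_num, ?_, ?_⟩
  · -- derivative
    have h1 : HasDerivAt (fun t : ℝ => Real.exp (2 * u * t)) (2 * u) 0 := by
      have := ((hasDerivAt_id (0:ℝ)).const_mul (2 * u)).exp
      simpa using this
    have h2 : HasDerivAt (fun t : ℝ => Real.exp (-(u * t))) (-u) 0 := by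
      have := (((hasDerivAt_id (0:ℝ)).const_mul u).neg).exp
      simpa using this
    have h3 : HasDerivAt (fun t : ℝ => Real.cos (c * t)) 0 0 := by
      have := (((hasDerivAt_id (0:ℝ)).const_mul c)).cos
      simpa using this
    have h4 : HasDerivAt (fun t : ℝ => Real.exp (-(w * t))) (-w) 0 := by
      have := (((hasDerivAt_id (0:ℝ)).const_mul w).neg).exp
      simpa using this
    have hprod := (h2.const_mul 2).mul h3
    have := (h1.add hprod).sub (h4.const_mul 3)
    convert this using 1
    · rfl
    · rfl
    · rfl
    · simp only [mul_zero, Real.cos_zero, Real.exp_zero, neg_zero]; ring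
  · -- positivity
    intro t ht
    set K : ℝ → ℝ := fun s => Real.exp (3 * u * s) - 3 * Real.exp (u * s) + 2 * Real.cos (c * s)
      with hK
    have hKd : ∀ x : ℝ, HasDerivAt K
        (3 * u * Real.exp (3 * u * x) - 3 * (u * Real.exp (u * x)) + 2 * (-(c * Real.sin (c * x)))) x := by
      intro x
      have h1 : HasDerivAt (fun s : ℝ => Real.exp (3 * u * s)) (3 * u * Real.exp (3 * u * x)) x := by
        have := ((hasDerivAt_id x).const_mul (3 * u)).exp
        simpa [mul_comm] using this
      have h2 : HasDerivAt (fun s : ℝ => Real.exp (u * s)) (u * Real.exp (u * x)) x := by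
        have := ((hasDerivAt_id x).const_mul u).exp
        simpa [mul_comm] using this
      have h3 : HasDerivAt (fun s : ℝ => Real.cos (c * s)) (-(c * Real.sin (c * x))) x := by
        have := ((hasDerivAt_id x).const_mul c).cos
        simpa [mul_comm] using this
      exact (h1.sub (h2.const_mul 3)).add (h3.const_mul 2)
    have hmono : StrictMonoOn K (Set.Ici (0:ℝ)) := by
      apply strictMonoOn_of_deriv_pos (convex_Ici 0)
      · exact fun x _ => ((hKd x).continuousAt).continuousWithinAt
      · intro x hx
        rw [interior_Ici] at hx
        rw [(hKd x).deriv]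
        have hx0 : 0 < x := hx
        have hA : 1 ≤ Real.exp (u * x) := Real.one_le_exp (by positivity)
        have hB : 1 + 2 * u * x < Real.exp (2 * u * x) := by
          have := Real.add_one_lt_exp (x := 2 * u * x) (by positivity)
          linarith
        have hAB : Real.exp (3 * u * x) = Real.exp (u * x) * Real.exp (2 * u * x) := by
          rw [← Real.exp_add]; ring_nf
        have hsin : c * Real.sin (c * x) ≤ 3 * u ^ 2 * x := by
          have h1 : c * Real.sin (c * x) ≤ |c * Real.sin (c * x)| := le_abs_self _
          have h2 : |c * Real.sin (c * x)| ≤ |c| * |c * x| := by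
            rw [abs_mul]
            exact mul_le_mul_of_nonneg_left Real.abs_sin_le_abs (abs_nonneg c)
          have h3 : |c| * |c * x| = c ^ 2 * x := by
            rw [abs_mul c x, abs_of_pos hx0]
            linear_combination x * sq_abs c
          calc c * Real.sin (c * x) ≤ c ^ 2 * x := by rw [← h3]; exact h1.trans h2
            _ ≤ 3 * u ^ 2 * x := by rw [hc2]; nlinarith
        have hB1 : 2 * u * x < Real.exp (2 * u * x) - 1 := by linarith
        have h6 : Real.exp (2 * u * x) - 1 ≤ Real.exp (u * x) * (Real.exp (2 * u * x) - 1) :=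
          le_mul_of_one_le_left (by nlinarith [mul_pos hu hx0]) hA
        have h8 : 3 * u * (2 * u * x) < 3 * u * (Real.exp (u * x) * (Real.exp (2 * u * x) - 1)) :=
          mul_lt_mul_of_pos_left (lt_of_lt_of_le hB1 h6) (by positivity)
        rw [hAB]
        nlinarith [h8, hsin]
    have hk : 0 < K t := by
      have := hmono Set.self_mem_Ici (Set.mem_Ici.2 ht.le) ht
      have h0 : K 0 = 0 := by norm_num [hK]
      linarith
    have e1 : Real.exp (-(u * t)) * Real.exp (3 * u * t) = Real.exp (2 * u * t) := by
      rw [← Real.exp_add]; ring_nf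
    have e2 : Real.exp (-(u * t)) * Real.exp (u * t) = 1 := by
      rw [← Real.exp_add]; simp
    have hew : Real.exp (-(w * t)) ≤ 1 := Real.exp_le_one_iff.2 (by nlinarith)
    have hpos := mul_pos (Real.exp_pos (-(u * t))) hk
    simp only [g, hK] at hpos ⊢
    nlinarith [hpos, e1, e2, hew]
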